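/- Suppose each f_i is L-smooth and μ-strongly convex, f = (1/m)∑_{i=1}^m f_i with minimizer x*, all clients perform H ≥ 1 local FedLin steps per round with common step size η = 1/(6LH), and there is no compression. Then after T rounds, f(x̄_{T+1}) - f(x*) ≤ (1 - 1/(6κ))^T (f(x̄₁) - f(x*)), where κ = L/μ. -/

import Mathlib

open Finset RealInnerProductSpace

lemma fedlin_aux_descent {d : ℕ} {φ : EuclideanSpace ℝ (Fin d) → ℝ}
    (hdφ : Differentiable ℝ φ) {L : ℝ} (hL : 0 ≤ L)
    (hlip : ∀ u v, ‖gradient φ u - gradient φ v‖ ≤ L * ‖u - v‖)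
    (x y : EuclideanSpace ℝ (Fin d)) :
    φ y ≤ φ x + ⟪y - x, gradient φ x⟫ + L / 2 * ‖y - x‖ ^ 2 := by
  set v := y - x with hv
  have hFd : ∀ p, HasFDerivAt φ ((InnerProductSpace.toDual ℝ _) (gradient φ p)) p := by
    intro p
    exact hasGradientAt_iff_hasFDerivAt.mp (hdφ p).hasGradientAt
  have hline : ∀ s : ℝ, HasDerivAt (fun s : ℝ => x + s • v) v s := by
    intro s
    simpa using ((hasDerivAt_id s).smul_const v).const_add x
  have hψ : ∀ s : ℝ, HasDerivAt (fun s : ℝ => φ (x + s • v))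
      ⟪v, gradient φ (x + s • v)⟫ s := by
    intro s
    have h := (hFd (x + s • v)).comp_hasDerivAt s (hline s)
    rw [InnerProductSpace.toDual_apply_apply, real_inner_comm] at h
    exact h
  have hgc : Continuous (gradient φ) := by
    have : LipschitzWith ⟨L, hL⟩ (gradient φ) := by
      apply LipschitzWith.of_dist_le_mul
      intro u w
      rw [dist_eq_norm, dist_eq_norm]; exact hlip u w
    exact this.continuous
  have hcont : Continuous (fun s : ℝ => ⟪v, gradient φ (x + s • v)⟫) := by
    exact Continuous.inner continuous_const
      (hgc.comp (by continuity))
  have hFTC : ∫ s in (0:ℝ)..1, ⟪v, gradient φ (x + s • v)⟫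
      = φ (x + (1:ℝ) • v) - φ (x + (0:ℝ) • v) :=
    intervalIntegral.integral_eq_sub_of_hasDerivAt (fun s _ => hψ s)
      (hcont.intervalIntegrable 0 1)
  have hx1 : x + (1:ℝ) • v = y := by rw [hv]; simp
  have hx0 : x + (0:ℝ) • v = x := by simp
  rw [hx1, hx0] at hFTC
  have hib : IntervalIntegrable (fun s : ℝ => L * s * ‖v‖ ^ 2)
      MeasureTheory.volume 0 1 :=
    (by fun_prop : Continuous fun s : ℝ => L * s * ‖v‖ ^ 2).intervalIntegrable 0 1
  have hib2 : IntervalIntegrable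
      (fun s : ℝ => ⟪v, gradient φ x⟫ + L * s * ‖v‖ ^ 2) MeasureTheory.volume 0 1 :=
    (by fun_prop : Continuous fun s : ℝ => ⟪v, gradient φ x⟫ + L * s * ‖v‖ ^ 2).intervalIntegrable 0 1
  have hmono : ∫ s in (0:ℝ)..1, ⟪v, gradient φ (x + s • v)⟫
      ≤ ∫ s in (0:ℝ)..1, (⟪v, gradient φ x⟫ + L * s * ‖v‖ ^ 2) := by
    apply intervalIntegral.integral_mono_on (by norm_num)
      (hcont.intervalIntegrable 0 1)
      hib2
    intro s hs
    have hs0 : 0 ≤ s := hs.1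
    have hs1 : s ≤ 1 := hs.2
    have h1 : ⟪v, gradient φ (x + s • v)⟫ - ⟪v, gradient φ x⟫
        = ⟪v, gradient φ (x + s • v) - gradient φ x⟫ := by
      rw [inner_sub_right]
    have h2 : ⟪v, gradient φ (x + s • v) - gradient φ x⟫
        ≤ ‖v‖ * ‖gradient φ (x + s • v) - gradient φ x‖ :=
      real_inner_le_norm _ _
    have h3 : ‖gradient φ (x + s • v) - gradient φ x‖ ≤ L * (s * ‖v‖) := by
      have := hlip (x + s • v) x
      simpa [norm_smul, abs_of_nonneg hs0] using this
    nlinarith [norm_nonneg v, mul_le_mul_of_nonneg_left h3 (norm_nonneg v)]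
  have hint : ∫ s in (0:ℝ)..1, (⟪v, gradient φ x⟫ + L * s * ‖v‖ ^ 2)
      = ⟪v, gradient φ x⟫ + L / 2 * ‖v‖ ^ 2 := by
    rw [intervalIntegral.integral_add intervalIntegrable_const hib]
    simp only [intervalIntegral.integral_const]
    have : ∫ s in (0:ℝ)..1, L * s * ‖v‖ ^ 2 = L / 2 * ‖v‖ ^ 2 := by
      have : (fun s : ℝ => L * s * ‖v‖ ^ 2) = fun s : ℝ => (L * ‖v‖ ^ 2) * s := by
        funext s; ring
      rw [this, intervalIntegral.integral_const_mul, integral_id]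
      ring
    rw [this]; simp
  rw [hint] at hmono
  rw [hFTC] at hmono
  linarith


set_option maxHeartbeats 1000000 in
theorem fedlin_linear_convergence_strongly_convex {d m H : ℕ} (hm : 0 < m) (hH : 1 ≤ H)
    (f : Fin m → EuclideanSpace ℝ (Fin d) → ℝ)
    (F : EuclideanSpace ℝ (Fin d) → ℝ)
    (hF : ∀ z, F z = (1 / (m : ℝ)) * ∑ i, f i z)
    (L μ : ℝ) (hL : 0 < L) (hμ : 0 < μ)
    (hdiff : ∀ i, Differentiable ℝ (f i))
    (hsmooth : ∀ i, LipschitzWith L.toNNReal (gradient (f i)))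
    (hstrong : ∀ i, ∀ x y : EuclideanSpace ℝ (Fin d),
      f i y - f i x ≥ ⟪y - x, gradient (f i) x⟫ + μ / 2 * ‖y - x‖ ^ 2)
    (η : ℝ) (hη : η = 1 / (6 * L * H))
    (xbar : ℕ → EuclideanSpace ℝ (Fin d))
    (x : ℕ → Fin m → ℕ → EuclideanSpace ℝ (Fin d))
    (hx0 : ∀ t, 1 ≤ t → ∀ i, x t i 0 = xbar t)
    (hrec : ∀ t, 1 ≤ t → ∀ i, ∀ ℓ < H, x t i (ℓ + 1) =
      x t i ℓ - η • (gradient (f i) (x t i ℓ) - gradient (f i) (xbar t)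
        + gradient F (xbar t)))
    (havg : ∀ t, 1 ≤ t → xbar (t + 1) = (1 / (m : ℝ)) • ∑ i, x t i H)
    (xstar : EuclideanSpace ℝ (Fin d)) (hmin : ∀ z, F xstar ≤ F z)
    (T : ℕ) :
    F (xbar (T + 1)) - F xstar ≤
      (1 - 1 / (6 * (L / μ))) ^ T * (F (xbar 1) - F xstar) := by
  -- trivial case d = 0
  rcases Nat.eq_zero_or_pos d with hd0 | hdpos
  · subst hd0
    haveI : Subsingleton (EuclideanSpace ℝ (Fin 0)) :=
      ⟨fun a b => by ext i; exact i.elim0⟩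
    rw [Subsingleton.elim (xbar (T + 1)) xstar, Subsingleton.elim (xbar 1) xstar]
    simp
  have hm' : (0:ℝ) < m := by exact_mod_cast hm
  have hH' : (0:ℝ) < H := by exact_mod_cast hH
  have hη0 : 0 < η := by rw [hη]; positivity
  have hηL : η * L * H = 1 / 6 := by rw [hη]; field_simp
  have hηH : η * H = 1 / (6 * L) := by rw [hη]; field_simp
  -- Lipschitz gradients, real form
  have hlipi : ∀ i (u v : EuclideanSpace ℝ (Fin d)),
      ‖gradient (f i) u - gradient (f i) v‖ ≤ L * ‖u - v‖ := by
    intro i u v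
    have := (hsmooth i).dist_le_mul u v
    simpa [dist_eq_norm, Real.coe_toNNReal L hL.le] using this
  -- gradient of F
  have hgradF : ∀ z, HasGradientAt F ((m:ℝ)⁻¹ • ∑ i, gradient (f i) z) z := by
    intro z
    rw [hasGradientAt_iff_hasFDerivAt]
    have hsum : HasFDerivAt (fun w => ∑ i, f i w)
        (∑ i, (InnerProductSpace.toDual ℝ _) (gradient (f i) z)) z :=
      HasFDerivAt.fun_sum fun i _ => hasGradientAt_iff_hasFDerivAt.mp (hdiff i z).hasGradientAt
    have h2 := hsum.const_mul (1 / (m:ℝ))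
    have hFeq : F = fun w => (1 / (m:ℝ)) * ∑ i, f i w := funext hF
    rw [hFeq]
    refine h2.congr_fderiv ?_
    apply ContinuousLinearMap.ext
    intro w
    simp [InnerProductSpace.toDual_apply_apply, real_inner_smul_left, sum_inner, one_div]
  have hgF : ∀ z, gradient F z = (m:ℝ)⁻¹ • ∑ i, gradient (f i) z :=
    fun z => (hgradF z).gradient
  have hdF : Differentiable ℝ F := fun z => (hgradF z).differentiableAt
  have hlipF : ∀ u v : EuclideanSpace ℝ (Fin d),
      ‖gradient F u - gradient F v‖ ≤ L * ‖u - v‖ := by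
    intro u v
    rw [hgF u, hgF v, ← smul_sub, ← Finset.sum_sub_distrib]
    have h1 : ‖∑ i, (gradient (f i) u - gradient (f i) v)‖ ≤ (m:ℝ) * (L * ‖u - v‖) := by
      refine (norm_sum_le _ _).trans ?_
      calc ∑ i, ‖gradient (f i) u - gradient (f i) v‖
          ≤ ∑ _i : Fin m, L * ‖u - v‖ := Finset.sum_le_sum fun i _ => hlipi i u v
        _ = (m:ℝ) * (L * ‖u - v‖) := by
            rw [Finset.sum_const, Finset.card_univ, Fintype.card_fin, nsmul_eq_mul]
    rw [norm_smul, Real.norm_eq_abs, abs_of_nonneg (by positivity : (0:ℝ) ≤ (m:ℝ)⁻¹)]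
    have h2 := mul_le_mul_of_nonneg_left h1 (by positivity : (0:ℝ) ≤ (m:ℝ)⁻¹)
    have h3 : (m:ℝ)⁻¹ * ((m:ℝ) * (L * ‖u - v‖)) = L * ‖u - v‖ := by field_simp
    linarith
  -- strong convexity of F
  have hstrongF : ∀ u w : EuclideanSpace ℝ (Fin d),
      F w - F u ≥ ⟪w - u, gradient F u⟫ + μ / 2 * ‖w - u‖ ^ 2 := by
    intro u w
    have hFw : F w - F u = (1 / (m:ℝ)) * ∑ i, (f i w - f i u) := by
      rw [hF, hF, Finset.sum_sub_distrib]; ring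
    have hS : ⟪w - u, gradient F u⟫ = (m:ℝ)⁻¹ * ∑ i, ⟪w - u, gradient (f i) u⟫ := by
      rw [hgF, real_inner_smul_right, inner_sum]
    have hsum : (∑ i, ⟪w - u, gradient (f i) u⟫) + (m:ℝ) * (μ / 2 * ‖w - u‖ ^ 2)
        ≤ ∑ i, (f i w - f i u) := by
      have h := Finset.sum_le_sum (fun (i : Fin m) (_ : i ∈ Finset.univ) => hstrong i u w)
      rw [Finset.sum_add_distrib, Finset.sum_const, Finset.card_univ, Fintype.card_fin,
        nsmul_eq_mul] at h
      exact h
    have h2 := mul_le_mul_of_nonneg_left hsum (by positivity : (0:ℝ) ≤ (m:ℝ)⁻¹)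
    have h3 : (m:ℝ)⁻¹ * ((∑ i, ⟪w - u, gradient (f i) u⟫) + (m:ℝ) * (μ / 2 * ‖w - u‖ ^ 2))
        = (m:ℝ)⁻¹ * (∑ i, ⟪w - u, gradient (f i) u⟫)
          + (m:ℝ)⁻¹ * (m:ℝ) * (μ / 2 * ‖w - u‖ ^ 2) := by ring
    have h4 : (m:ℝ)⁻¹ * (m:ℝ) = 1 := by field_simp
    rw [hFw, hS, ge_iff_le, one_div]
    rw [h3, h4] at h2
    linarith
  -- PL inequality
  have hPL : ∀ z, 2 * μ * (F z - F xstar) ≤ ‖gradient F z‖ ^ 2 := by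
    intro z
    have h := hstrongF z xstar
    have h2 := abs_real_inner_le_norm (xstar - z) (gradient F z)
    nlinarith [sq_nonneg (‖gradient F z‖ - μ * ‖xstar - z‖), neg_abs_le
      (⟪xstar - z, gradient F z⟫ : ℝ), norm_nonneg (xstar - z)]
  -- μ ≤ L
  have hμL : μ ≤ L := by
    set i0 : Fin m := ⟨0, hm⟩
    set u : EuclideanSpace ℝ (Fin d) := EuclideanSpace.single (⟨0, hdpos⟩ : Fin d) (1:ℝ)
      with hu_def
    have hu : ‖u‖ = 1 := by rw [hu_def, EuclideanSpace.norm_single]; norm_num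
    have h1 := hstrong i0 0 u
    have h2 := hstrong i0 u 0
    simp only [sub_zero, zero_sub, norm_neg, inner_neg_left, hu, one_pow] at h1 h2
    have hlip0 := hlipi i0 u 0
    rw [sub_zero, hu, mul_one] at hlip0
    have hinner : ⟪u, gradient (f i0) u - gradient (f i0) 0⟫
        ≤ ‖u‖ * ‖gradient (f i0) u - gradient (f i0) 0‖ := real_inner_le_norm _ _
    rw [inner_sub_right, hu, one_mul] at hinner
    nlinarith
  -- per-round contraction
  have key : ∀ t, 1 ≤ t → F (xbar (t + 1)) - F xstar ≤
      (1 - μ / (6 * L)) * (F (xbar t) - F xstar) := by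
    intro t ht
    have hH1 : (1:ℝ) ≤ (H:ℝ) := by exact_mod_cast hH
    have ha0 : 0 < η * L := by positivity
    have haa : η * L ≤ 1/6 := by
      nlinarith [mul_le_mul_of_nonneg_left hH1 ha0.le]
    -- drift bound
    have hdrift : ∀ i : Fin m, ∀ ℓ : ℕ, ℓ ≤ H →
        ‖x t i ℓ - xbar t‖ ≤ ((1 + η * L) ^ ℓ - 1) / L * ‖gradient F (xbar t)‖ := by
      intro i ℓ
      induction ℓ with
      | zero =>
        intro _
        rw [hx0 t ht i]
        simp
      | succ ℓ ih =>
        intro hℓ1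
        have hℓ : ℓ < H := hℓ1
        have ihℓ := ih hℓ.le
        rw [hrec t ht i ℓ hℓ]
        have hrw : x t i ℓ - η • (gradient (f i) (x t i ℓ) - gradient (f i) (xbar t)
              + gradient F (xbar t)) - xbar t
            = (x t i ℓ - xbar t) - η • (gradient (f i) (x t i ℓ) - gradient (f i) (xbar t)
              + gradient F (xbar t)) := by abel
        rw [hrw]
        have hnB := hlipi i (x t i ℓ) (xbar t)
        have h1 : ‖(x t i ℓ - xbar t) - η • (gradient (f i) (x t i ℓ)
              - gradient (f i) (xbar t) + gradient F (xbar t))‖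
            ≤ ‖x t i ℓ - xbar t‖ + η * (L * ‖x t i ℓ - xbar t‖ + ‖gradient F (xbar t)‖) := by
          refine (norm_sub_le _ _).trans ?_
          rw [norm_smul, Real.norm_eq_abs, abs_of_nonneg hη0.le]
          have h4 := norm_add_le (gradient (f i) (x t i ℓ) - gradient (f i) (xbar t))
            (gradient F (xbar t))
          nlinarith [norm_nonneg (gradient F (xbar t))]
        refine h1.trans ?_
        have heq : ((1 + η * L) ^ (ℓ + 1) - 1) / L * ‖gradient F (xbar t)‖
            = (1 + η * L) * (((1 + η * L) ^ ℓ - 1) / L * ‖gradient F (xbar t)‖)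
              + η * ‖gradient F (xbar t)‖ := by
          field_simp
          ring
        rw [heq]
        nlinarith [mul_le_mul_of_nonneg_left ihℓ (by positivity : (0:ℝ) ≤ 1 + η * L),
          norm_nonneg (gradient F (xbar t)), norm_nonneg (x t i ℓ - xbar t)]
    -- power bound
    have hb : (1 + η * L) ^ H ≤ 6 / 5 := by
      have hber : (5:ℝ)/6 ≤ (1 - η * L) ^ H := by
        have h := one_add_mul_le_pow (show (-2:ℝ) ≤ -(η * L) by nlinarith) H
        have h2 : (H:ℝ) * (η * L) = 1/6 := by nlinarith [hηL]
        calc (5:ℝ)/6 = 1 + (H:ℝ) * -(η * L) := by rw [mul_neg]; linarith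
          _ ≤ (1 + -(η * L)) ^ H := h
          _ = (1 - η * L) ^ H := by rw [← sub_eq_add_neg]
      have hmul : (1 + η * L) ^ H * (1 - η * L) ^ H ≤ 1 := by
        rw [← mul_pow]
        have h1 : (1 + η * L) * (1 - η * L) = 1 - (η * L) ^ 2 := by ring
        rw [h1]
        apply pow_le_one₀ (by nlinarith) (by nlinarith)
      nlinarith [pow_nonneg (by positivity : (0:ℝ) ≤ 1 + η * L) H]
    -- gradient deviation bound
    have hG : ∀ i : Fin m, ∀ ℓ, ℓ < H →
        ‖gradient (f i) (x t i ℓ) - gradient (f i) (xbar t)‖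
          ≤ 1/5 * ‖gradient F (xbar t)‖ := by
      intro i ℓ hℓ
      have h1 := (hlipi i (x t i ℓ) (xbar t)).trans
        (mul_le_mul_of_nonneg_left (hdrift i ℓ hℓ.le) hL.le)
      have hpm : (1 + η * L) ^ ℓ ≤ (1 + η * L) ^ H :=
        pow_le_pow_right₀ (by linarith) hℓ.le
      have heq : L * (((1 + η * L) ^ ℓ - 1) / L * ‖gradient F (xbar t)‖)
          = ((1 + η * L) ^ ℓ - 1) * ‖gradient F (xbar t)‖ := by
        field_simp
      rw [heq] at h1
      refine h1.trans ?_
      have h5 : (1 + η * L) ^ ℓ - 1 ≤ 1/5 := by nlinarith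
      nlinarith [norm_nonneg (gradient F (xbar t))]
    -- telescoping
    have hxiH : ∀ i : Fin m, x t i H
        = xbar t - ((H:ℝ) * η) • gradient F (xbar t) - η • ∑ ℓ ∈ Finset.range H,
            (gradient (f i) (x t i ℓ) - gradient (f i) (xbar t)) := by
      intro i
      set D : ℕ → EuclideanSpace ℝ (Fin d) :=
        fun ℓ => gradient (f i) (x t i ℓ) - gradient (f i) (xbar t) with hD
      have key2 : ∀ n, n ≤ H → x t i n
          = xbar t - ((n:ℝ) * η) • gradient F (xbar t) - η • ∑ ℓ ∈ Finset.range n, D ℓ := by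
        intro n
        induction n with
        | zero => intro _; simp [hx0 t ht i]
        | succ n ih =>
          intro hn
          have hn' : n < H := hn
          have hstep : x t i (n + 1) = x t i n - η • (D n + gradient F (xbar t)) := by
            rw [hD]
            exact hrec t ht i n hn'
          rw [hstep, ih hn'.le, Finset.sum_range_succ]
          push_cast
          module
      exact key2 H le_rfl
    have hxbar : xbar (t + 1) = xbar t - ((H:ℝ) * η) • gradient F (xbar t)
        - η • ((m:ℝ)⁻¹ • ∑ i, ∑ ℓ ∈ Finset.range H,
            (gradient (f i) (x t i ℓ) - gradient (f i) (xbar t))) := by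
      rw [havg t ht, Finset.sum_congr rfl fun i _ => hxiH i]
      simp only [Finset.sum_sub_distrib, ← Finset.smul_sum, Finset.sum_const,
        Finset.card_univ, Fintype.card_fin, ← Nat.cast_smul_eq_nsmul ℝ]
      have hms : (m:ℝ) ≠ 0 := ne_of_gt hm'
      match_scalars <;> field_simp
    -- norm of the perturbation
    have hSnorm : ‖∑ i, ∑ ℓ ∈ Finset.range H,
        (gradient (f i) (x t i ℓ) - gradient (f i) (xbar t))‖
        ≤ (m:ℝ) * ((H:ℝ) * (1/5 * ‖gradient F (xbar t)‖)) := by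
      refine (norm_sum_le _ _).trans ?_
      calc ∑ i, ‖∑ ℓ ∈ Finset.range H,
            (gradient (f i) (x t i ℓ) - gradient (f i) (xbar t))‖
          ≤ ∑ _i : Fin m, ((H:ℝ) * (1/5 * ‖gradient F (xbar t)‖)) := by
            refine Finset.sum_le_sum fun i _ => ?_
            refine (norm_sum_le _ _).trans ?_
            calc ∑ ℓ ∈ Finset.range H, ‖gradient (f i) (x t i ℓ) - gradient (f i) (xbar t)‖
                ≤ ∑ _ℓ ∈ Finset.range H, (1/5 * ‖gradient F (xbar t)‖) :=
                  Finset.sum_le_sum fun ℓ hℓ => hG i ℓ (Finset.mem_range.mp hℓ)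
              _ = (H:ℝ) * (1/5 * ‖gradient F (xbar t)‖) := by
                  rw [Finset.sum_const, Finset.card_range, nsmul_eq_mul]
        _ = (m:ℝ) * ((H:ℝ) * (1/5 * ‖gradient F (xbar t)‖)) := by
            rw [Finset.sum_const, Finset.card_univ, Fintype.card_fin, nsmul_eq_mul]
    have hp : ‖(m:ℝ)⁻¹ • ∑ i, ∑ ℓ ∈ Finset.range H,
        (gradient (f i) (x t i ℓ) - gradient (f i) (xbar t))‖
        ≤ (H:ℝ)/5 * ‖gradient F (xbar t)‖ := by
      rw [norm_smul, Real.norm_eq_abs, abs_of_nonneg (by positivity : (0:ℝ) ≤ (m:ℝ)⁻¹)]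
      have h2 := mul_le_mul_of_nonneg_left hSnorm (by positivity : (0:ℝ) ≤ (m:ℝ)⁻¹)
      have h3 : (m:ℝ)⁻¹ * ((m:ℝ) * ((H:ℝ) * (1/5 * ‖gradient F (xbar t)‖)))
          = (H:ℝ)/5 * ‖gradient F (xbar t)‖ := by field_simp
      linarith
    -- abbreviate the perturbation
    set P : EuclideanSpace ℝ (Fin d) := (m:ℝ)⁻¹ • ∑ i, ∑ ℓ ∈ Finset.range H,
      (gradient (f i) (x t i ℓ) - gradient (f i) (xbar t)) with hP
    have hΔ : xbar (t + 1) - xbar t = -(((H:ℝ) * η) • gradient F (xbar t)) - η • P := by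
      rw [hxbar]; abel
    -- inner product bound
    have hinner : ⟪xbar (t + 1) - xbar t, gradient F (xbar t)⟫
        ≤ -(4/5) * (η * (H:ℝ)) * ‖gradient F (xbar t)‖ ^ 2 := by
      rw [hΔ, inner_sub_left, inner_neg_left, real_inner_smul_left, real_inner_smul_left,
        real_inner_self_eq_norm_sq]
      have h2 := neg_abs_le (⟪P, gradient F (xbar t)⟫ : ℝ)
      have h3 := abs_real_inner_le_norm P (gradient F (xbar t))
      have h4 := mul_le_mul_of_nonneg_right hp (norm_nonneg (gradient F (xbar t)))
      nlinarith [mul_le_mul_of_nonneg_left (h3.trans h4) hη0.le]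
    -- norm bound
    have hnorm : ‖xbar (t + 1) - xbar t‖ ≤ 6/5 * (η * (H:ℝ)) * ‖gradient F (xbar t)‖ := by
      rw [hΔ]
      refine (norm_sub_le _ _).trans ?_
      rw [norm_neg, norm_smul, norm_smul, Real.norm_eq_abs, Real.norm_eq_abs,
        abs_of_nonneg (by positivity : (0:ℝ) ≤ (H:ℝ) * η), abs_of_nonneg hη0.le]
      nlinarith [mul_le_mul_of_nonneg_left hp hη0.le]
    have hsq : ‖xbar (t + 1) - xbar t‖ ^ 2
        ≤ (6/5 * (η * (H:ℝ)))^2 * ‖gradient F (xbar t)‖ ^ 2 := by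
      have h := pow_le_pow_left₀ (norm_nonneg _) hnorm 2
      calc ‖xbar (t + 1) - xbar t‖ ^ 2
          ≤ (6/5 * (η * (H:ℝ)) * ‖gradient F (xbar t)‖) ^ 2 := h
        _ = (6/5 * (η * (H:ℝ)))^2 * ‖gradient F (xbar t)‖ ^ 2 := by ring
    -- descent
    have hdesc := fedlin_aux_descent hdF hL.le hlipF (xbar t) (xbar (t + 1))
    have hc6 : 6 * (L * (η * (H:ℝ))) = 1 := by
      rw [hηH]; field_simp
    have hc0 : 0 < η * (H:ℝ) := by positivity
    have hLc : L * (η * (H:ℝ)) = 1/6 := by linarith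
    have hFdec : 12 * L * (F (xbar (t + 1)) - F (xbar t))
        ≤ -‖gradient F (xbar t)‖ ^ 2 := by
      have hG2 : 0 ≤ ‖gradient F (xbar t)‖ ^ 2 := sq_nonneg _
      calc 12 * L * (F (xbar (t + 1)) - F (xbar t))
          ≤ 12 * L * (⟪xbar (t + 1) - xbar t, gradient F (xbar t)⟫
              + L/2 * ‖xbar (t + 1) - xbar t‖ ^ 2) := by
            have h0 : F (xbar (t + 1)) - F (xbar t)
                ≤ ⟪xbar (t + 1) - xbar t, gradient F (xbar t)⟫
                  + L/2 * ‖xbar (t + 1) - xbar t‖ ^ 2 := by linarith [hdesc]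
            exact mul_le_mul_of_nonneg_left h0 (by positivity)
        _ = 12 * L * ⟪xbar (t + 1) - xbar t, gradient F (xbar t)⟫
              + 6 * L * L * ‖xbar (t + 1) - xbar t‖ ^ 2 := by ring
        _ ≤ 12 * L * (-(4/5) * (η * (H:ℝ)) * ‖gradient F (xbar t)‖ ^ 2)
              + 6 * L * L * ((6/5 * (η * (H:ℝ)))^2 * ‖gradient F (xbar t)‖ ^ 2) := by
            have h1 := mul_le_mul_of_nonneg_left hinner (by positivity : (0:ℝ) ≤ 12 * L)
            have h2 := mul_le_mul_of_nonneg_left hsq (by positivity : (0:ℝ) ≤ 6 * L * L)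
            linarith
        _ = -(48/5) * (L * (η * (H:ℝ))) * ‖gradient F (xbar t)‖ ^ 2
              + (216/25) * (L * (η * (H:ℝ)))^2 * ‖gradient F (xbar t)‖ ^ 2 := by ring
        _ = -(48/5) * (1/6) * ‖gradient F (xbar t)‖ ^ 2
              + (216/25) * (1/6)^2 * ‖gradient F (xbar t)‖ ^ 2 := by rw [hLc]
        _ ≤ -‖gradient F (xbar t)‖ ^ 2 := by nlinarith
    -- combine with PL
    have hD0 : 0 ≤ F (xbar t) - F xstar := by linarith [hmin (xbar t)]
    have he : 12 * L * ((1 - μ / (6 * L)) * (F (xbar t) - F xstar))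
        = 12 * L * (F (xbar t) - F xstar) - 2 * μ * (F (xbar t) - F xstar) := by
      field_simp
      ring
    have hgoal : 12 * L * (F (xbar (t + 1)) - F xstar)
        ≤ 12 * L * ((1 - μ / (6 * L)) * (F (xbar t) - F xstar)) := by
      rw [he]
      nlinarith [hPL (xbar t)]
    exact le_of_mul_le_mul_left (by linarith [hgoal]) (by positivity : (0:ℝ) < 12 * L)
  -- conclusion by induction
  have hqeq : 1 - 1 / (6 * (L / μ)) = 1 - μ / (6 * L) := by
    rw [← mul_div_assoc, one_div_div]
  have hq0 : 0 ≤ 1 - μ / (6 * L) := by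
    have : μ / (6 * L) ≤ 1 := by
      rw [div_le_one (by positivity)]; linarith
    linarith
  rw [hqeq]
  induction T with
  | zero => simp
  | succ T ih =>
    calc F (xbar (T + 1 + 1)) - F xstar
        ≤ (1 - μ / (6 * L)) * (F (xbar (T + 1)) - F xstar) :=
          key (T + 1) (Nat.le_add_left 1 T)
      _ ≤ (1 - μ / (6 * L)) * ((1 - μ / (6 * L)) ^ T * (F (xbar 1) - F xstar)) :=
          mul_le_mul_of_nonneg_left ih hq0
      _ = (1 - μ / (6 * L)) ^ (T + 1) * (F (xbar 1) - F xstar) := by ring
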